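/- Set κ₀ = −max_{0≤r≤R_s} ( f_p*(r) + g*(r) + ∫₀^r g_p*(ρ)p_s'(ρ) dρ ); then κ₀ > 0, and κ₀ is independent of k. If ψ ∈ C¹([0,R_s]×[0,∞);ℝ) is nonnegative and satisfies ∂_t ψ(r,t) = (𝓛̂_k⁺ψ(·,t))(r) for 0 < r < R_s, t > 0, then (d/dt) J(ψ(·,t)) ≤ −κ₀ J(ψ(·,t)) for all t > 0, where J(φ) = ∫₀^{R_s} g_p*(r)p_s'(r)φ(r) dr. (Lemma 4.6, inequality (4.25).) -/

import Mathlib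

open Set Real MeasureTheory intervalIntegral
set_option maxHeartbeats 2000000

private lemma aux_eq_zero_on_Icc {R : ℝ} (hR : 0 < R) {F : ℝ → ℝ}
    (hF : ContinuousOn F (Set.Icc 0 R)) (h0 : ∀ r ∈ Set.Ioo (0:ℝ) R, F r = 0) :
    ∀ r ∈ Set.Icc (0:ℝ) R, F r = 0 := by
  intro r hr
  have hcl : r ∈ closure (Set.Ioo (0:ℝ) R) := by
    rw [closure_Ioo hR.ne]; exact hr
  have hne : (nhdsWithin r (Set.Ioo (0:ℝ) R)).NeBot :=
    mem_closure_iff_nhdsWithin_neBot.1 hcl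
  have h1 : Filter.Tendsto F (nhdsWithin r (Set.Ioo (0:ℝ) R)) (nhds (F r)) :=
    (hF r hr).mono Set.Ioo_subset_Icc_self
  have h2 : Filter.Tendsto F (nhdsWithin r (Set.Ioo (0:ℝ) R)) (nhds 0) := by
    apply Filter.Tendsto.congr' _ tendsto_const_nhds
    filter_upwards [self_mem_nhdsWithin] with x hx using (h0 x hx).symm
  exact tendsto_nhds_unique h1 h2

private lemma aux_deriv_nonneg {R : ℝ} (hR : 0 < R) {F : ℝ → ℝ} {d r : ℝ}
    (hr : r ∈ Set.Icc (0:ℝ) R) (hm : MonotoneOn F (Set.Icc 0 R))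
    (hd : HasDerivAt F d r) : 0 ≤ d := by
  have hslope := hasDerivAt_iff_tendsto_slope.1 hd
  rcases lt_or_eq_of_le hr.2 with h | h
  · -- use slopes to the right
    have hsub : Set.Ioo r R ⊆ {x | x ≠ r} := fun x hx => ne_of_gt hx.1
    have hne : (nhdsWithin r (Set.Ioo r R)).NeBot := by
      apply mem_closure_iff_nhdsWithin_neBot.1
      rw [closure_Ioo h.ne]; exact ⟨le_rfl, h.le⟩
    have ht : Filter.Tendsto (slope F r) (nhdsWithin r (Set.Ioo r R)) (nhds d) :=
      hslope.mono_left (nhdsWithin_mono r hsub)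
    refine ge_of_tendsto ht ?_
    filter_upwards [self_mem_nhdsWithin] with x hx
    rw [slope_def_field]
    have hFx := hm hr ⟨by linarith [hx.1, hr.1], hx.2.le⟩ hx.1.le
    exact div_nonneg (by linarith) (by linarith [hx.1])
  · -- r = R, use slopes to the left
    have hsub : Set.Ioo 0 r ⊆ {x | x ≠ r} := fun x hx => ne_of_lt hx.2
    have hne : (nhdsWithin r (Set.Ioo 0 r)).NeBot := by
      apply mem_closure_iff_nhdsWithin_neBot.1
      rw [closure_Ioo (by rw [← h] at hR; exact hR.ne)]
      exact ⟨(by rw [← h] at hR; exact hR.le), le_rfl⟩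
    have ht : Filter.Tendsto (slope F r) (nhdsWithin r (Set.Ioo 0 r)) (nhds d) :=
      hslope.mono_left (nhdsWithin_mono r hsub)
    refine ge_of_tendsto ht ?_
    filter_upwards [self_mem_nhdsWithin] with x hx
    rw [slope_def_field]
    have hFx := hm ⟨hx.1.le, by linarith [hx.2, hr.2]⟩ hr hx.2.le
    rw [show (F x - F r) / (x - r) = (F r - F x) / (r - x) by
      rw [← neg_div_neg_eq]; ring_nf]
    exact div_nonneg (by linarith) (by linarith [hx.2])

private lemma contOn_slice {Rs t : ℝ} {ψ : ℝ → ℝ → ℝ}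
    (h : ContinuousOn (fun q : ℝ × ℝ => ψ q.1 q.2) (Set.Icc 0 Rs ×ˢ Set.Ici 0))
    (ht : t ∈ Set.Ici (0:ℝ)) : ContinuousOn (fun r => ψ r t) (Set.Icc 0 Rs) := by
  have : (fun r => ψ r t) = (fun q : ℝ × ℝ => ψ q.1 q.2) ∘ (fun r => (r, t)) := rfl
  rw [this]
  exact h.comp ((continuous_id.prodMk continuous_const).continuousOn)
    (fun r hr => ⟨hr, ht⟩)

private lemma aux_ae_ne (c : ℝ) : ∀ᵐ r : ℝ ∂(MeasureTheory.volume), r ≠ c := by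
  rw [MeasureTheory.ae_iff]
  simp only [not_not, Set.setOf_eq_eq_singleton]
  exact MeasureTheory.measure_singleton c



open Set Real intervalIntegral

/-- Lemma 4.6, inequality (4.25): with
`κ₀ = −max_{[0,R_s]} (f_p* + g* + ∫₀^r g_p* p_s')` one has `κ₀ > 0` (independently of
`k`), and for any nonnegative `C¹` solution `ψ` of `∂_t ψ = 𝓛̂_k⁺ ψ`,
`(d/dt) J(ψ(·,t)) ≤ −κ₀ J(ψ(·,t))` for all `t > 0`, where
`J(φ) = ∫₀^{R_s} g_p*(r) p_s'(r) φ(r) dr`. -/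
theorem stmt_19
    (n : ℕ) (hn : 2 ≤ n) (Rs : ℝ) (hRs : 0 < Rs)
    (kB kD kP kQ : ℝ)
    (h1 : kB > kD) (h2 : kD ≥ 2 * kQ) (h3 : 0 < kQ) (h4 : kB > kP) (h5 : kB * kQ ≤ kD * kP)
    (KB KD KP KQ KM KN : ℝ → ℝ) (α : ℝ → ℝ) (f g : ℝ → ℝ → ℝ)
    (hKB : KB = fun c => kB * c) (hKD : KD = fun c => kD * (1 - c))
    (hKP : KP = fun c => kP * c) (hKQ : KQ = fun c => kQ * (1 - c))
    (hKM : KM = fun c => KB c + KD c) (hKN : KN = fun c => KP c + KQ c)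
    (hα : α = fun c =>
      (KM c - KN c + Real.sqrt ((KM c - KN c) ^ 2 + 4 * KM c * KP c)) / (2 * KM c))
    (hf : f = fun c p => KP c + (KM c - KN c) * p - KM c * p ^ 2)
    (hg : g = fun c p => KM c * p - KD c)
    -- the radial stationary solution
    (cs cs' ps ps' vs vs' : ℝ → ℝ)
    (hcs : ∀ r ∈ Icc (0:ℝ) Rs, HasDerivAt cs (cs' r) r)
    (hcs'cont : ContinuousOn cs' (Icc 0 Rs))
    (hcsrange : ∀ r ∈ Icc (0:ℝ) Rs, cs r ∈ Ioc (0:ℝ) 1)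
    (hcsmono : MonotoneOn cs (Icc 0 Rs)) (hcsRs : cs Rs = 1)
    (hps : ∀ r ∈ Icc (0:ℝ) Rs, HasDerivAt ps (ps' r) r)
    (hps'cont : ContinuousOn ps' (Icc 0 Rs))
    (hpsrange : ∀ r ∈ Icc (0:ℝ) Rs, ps r ∈ Ioc (0:ℝ) 1)
    (hps'pos : ∀ r ∈ Ioc (0:ℝ) Rs, 0 < ps' r) (hps'0 : 0 ≤ ps' 0)
    (hps0 : ps 0 = α (cs 0))
    (hvs : ∀ r ∈ Icc (0:ℝ) Rs, HasDerivAt vs (vs' r) r)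
    (hvs'cont : ContinuousOn vs' (Icc 0 Rs))
    (hvs0 : vs 0 = 0) (hvsRs : vs Rs = 0)
    (hvsneg : ∀ r ∈ Ioo (0:ℝ) Rs, vs r < 0)
    (hstat1 : ∀ r ∈ Ioo (0:ℝ) Rs, vs r * ps' r = f (cs r) (ps r))
    (hstat2 : ∀ r ∈ Ioo (0:ℝ) Rs, vs' r + ((n - 1 : ℝ) / r) * vs r = g (cs r) (ps r))
    -- the coefficients of the linearization
    (fstar gstar fpstar fcstar gpstar : ℝ → ℝ)
    (hfstar : fstar = fun r => f (cs r) (ps r))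
    (hgstar : gstar = fun r => g (cs r) (ps r))
    (hfpstar : fpstar = fun r => KM (cs r) - KN (cs r) - 2 * KM (cs r) * ps r)
    (hfcstar : fcstar = fun r =>
      kP + ((kB - kD) - (kP - kQ)) * ps r - (kB - kD) * (ps r) ^ 2)
    (hgpstar : gpstar = fun r => KM (cs r))
    -- the mode `k`, the number `θ_k` and the coefficient `a_k`
    (k : ℕ) (θk : ℝ) (hθk : θk = (k : ℝ) / ((n : ℝ) + 2 * ((k : ℝ) - 1)))
    (ak : ℝ → ℝ) (hakcont : ContinuousOn ak (Icc 0 Rs))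
    (hak : ∀ r ∈ Ioc (0:ℝ) Rs,
      ak r = ((k : ℝ) / r) * vs r + gstar r - fcstar r * cs' r / ps' r)
    -- `κ₀`
    (κ₀ : ℝ)
    (hκ₀ : IsGreatest ((fun r => fpstar r + gstar r +
      ∫ ρ in (0:ℝ)..r, gpstar ρ * ps' ρ) '' Icc (0:ℝ) Rs) (-κ₀)) :
    0 < κ₀ ∧
    ∀ ψ ψr ψt : ℝ → ℝ → ℝ,
      ContinuousOn (fun q : ℝ × ℝ => ψ q.1 q.2) (Icc 0 Rs ×ˢ Ici 0) →
      ContinuousOn (fun q : ℝ × ℝ => ψr q.1 q.2) (Icc 0 Rs ×ˢ Ici 0) →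
      ContinuousOn (fun q : ℝ × ℝ => ψt q.1 q.2) (Icc 0 Rs ×ˢ Ici 0) →
      (∀ r ∈ Ioo (0:ℝ) Rs, ∀ t ∈ Ioi (0:ℝ), HasDerivAt (fun s => ψ s t) (ψr r t) r) →
      (∀ r ∈ Ioo (0:ℝ) Rs, ∀ t ∈ Ioi (0:ℝ), HasDerivAt (fun τ => ψ r τ) (ψt r t) t) →
      (∀ r ∈ Icc (0:ℝ) Rs, ∀ t ∈ Ici (0:ℝ), 0 ≤ ψ r t) →
      (∀ r ∈ Ioo (0:ℝ) Rs, ∀ t ∈ Ioi (0:ℝ),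
        ψt r t = -vs r * ψr r t + ak r * ψ r t
          + θk * (∫ ρ in r..Rs, (r / ρ) ^ (n + 2 * k - 2) * gpstar ρ * ps' ρ * ψ ρ t)
          + (1 - θk) * ∫ ρ in r..Rs, gpstar ρ * ps' ρ * ψ ρ t) →
      ∃ D : ℝ → ℝ, ∀ t ∈ Ioi (0:ℝ),
        HasDerivAt (fun τ => ∫ r in (0:ℝ)..Rs, gpstar r * ps' r * ψ r τ) (D t) t ∧
        D t ≤ -κ₀ * ∫ r in (0:ℝ)..Rs, gpstar r * ps' r * ψ r t := by
  have hRs0 : (0:ℝ) ≤ Rs := hRs.le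
  have h0mem : (0:ℝ) ∈ Icc (0:ℝ) Rs := ⟨le_rfl, hRs0⟩
  have hkD : 0 < kD := by linarith
  have hkB : 0 < kB := by linarith
  have hkP : 0 < kP := by nlinarith
  have hKMc : ∀ c, KM c = kD + (kB - kD) * c := by
    intro c; simp only [hKM, hKB, hKD]; ring
  have hKNc : ∀ c, KN c = kQ + (kP - kQ) * c := by
    intro c; simp only [hKN, hKP, hKQ]; ring
  have hgp_eq : ∀ r, gpstar r = kD + (kB - kD) * cs r := fun r => by
    simp only [hgpstar]; exact hKMc (cs r)
  have hcsC : ContinuousOn cs (Icc 0 Rs) :=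
    fun r hr => ((hcs r hr).continuousAt).continuousWithinAt
  have hpsC : ContinuousOn ps (Icc 0 Rs) :=
    fun r hr => ((hps r hr).continuousAt).continuousWithinAt
  have hgpC : ContinuousOn gpstar (Icc 0 Rs) := by
    have he : gpstar = fun r => kD + (kB - kD) * cs r := funext hgp_eq
    rw [he]; exact continuousOn_const.add (continuousOn_const.mul hcsC)
  have hcs'nn : ∀ r ∈ Icc (0:ℝ) Rs, 0 ≤ cs' r :=
    fun r hr => aux_deriv_nonneg hRs hr hcsmono (hcs r hr)
  have hps'nn : ∀ r ∈ Icc (0:ℝ) Rs, 0 ≤ ps' r := by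
    intro r hr
    rcases eq_or_lt_of_le hr.1 with h | h
    · rw [← h]; exact hps'0
    · exact (hps'pos r ⟨h, hr.2⟩).le
  have hpsmono : MonotoneOn ps (Icc 0 Rs) := by
    apply monotoneOn_of_deriv_nonneg (convex_Icc 0 Rs) hpsC
    · intro x hx
      rw [interior_Icc] at hx
      exact ((hps x (Ioo_subset_Icc_self hx)).differentiableAt).differentiableWithinAt
    · intro x hx
      rw [interior_Icc] at hx
      rw [(hps x (Ioo_subset_Icc_self hx)).deriv]
      exact hps'nn x (Ioo_subset_Icc_self hx)
  obtain ⟨hmemS, hub⟩ := hκ₀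
  refine ⟨?_, ?_⟩
  · -- Part 1 : positivity of κ₀
    obtain ⟨rstar, hrst, hval⟩ := hmemS
    have hsub : Icc (0:ℝ) rstar ⊆ Icc 0 Rs := Icc_subset_Icc le_rfl hrst.2
    -- FTC for gpstar * ps
    have hMps_deriv : ∀ r ∈ Icc (0:ℝ) Rs, HasDerivAt (fun x => gpstar x * ps x)
        ((kB - kD) * cs' r * ps r + gpstar r * ps' r) r := by
      intro r hr
      have h1' : HasDerivAt (fun x => kD + (kB - kD) * cs x) ((kB - kD) * cs' r) r :=
        ((hcs r hr).const_mul _).const_add _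
      have h2' := h1'.mul (hps r hr)
      have heq : (fun x => gpstar x * ps x) = fun x => (kD + (kB - kD) * cs x) * ps x :=
        funext fun x => by rw [hgp_eq x]
      rw [heq]
      rw [hgp_eq r]
      exact h2'
    have hint1 : IntervalIntegrable (fun ρ => (kB - kD) * cs' ρ * ps ρ) volume 0 rstar := by
      apply ContinuousOn.intervalIntegrable
      rw [uIcc_of_le hrst.1]
      exact (continuousOn_const.mul (hcs'cont.mono hsub)).mul (hpsC.mono hsub)
    have hint2 : IntervalIntegrable (fun ρ => gpstar ρ * ps' ρ) volume 0 rstar := by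
      apply ContinuousOn.intervalIntegrable
      rw [uIcc_of_le hrst.1]
      exact (hgpC.mono hsub).mul (hps'cont.mono hsub)
    have hI1 : ∫ ρ in (0:ℝ)..rstar, ((kB - kD) * cs' ρ * ps ρ + gpstar ρ * ps' ρ)
        = gpstar rstar * ps rstar - gpstar 0 * ps 0 := by
      apply intervalIntegral.integral_eq_sub_of_hasDerivAt
      · intro ρ hρ
        rw [uIcc_of_le hrst.1] at hρ
        exact hMps_deriv ρ (hsub hρ)
      · exact hint1.add hint2
    have hI2 : ∫ ρ in (0:ℝ)..rstar, cs' ρ = cs rstar - cs 0 := by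
      apply intervalIntegral.integral_eq_sub_of_hasDerivAt
      · intro ρ hρ
        rw [uIcc_of_le hrst.1] at hρ
        exact hcs ρ (hsub hρ)
      · apply ContinuousOn.intervalIntegrable
        rw [uIcc_of_le hrst.1]
        exact hcs'cont.mono hsub
    have hsplit : (∫ ρ in (0:ℝ)..rstar, ((kB - kD) * cs' ρ * ps ρ + gpstar ρ * ps' ρ))
        = (∫ ρ in (0:ℝ)..rstar, (kB - kD) * cs' ρ * ps ρ)
          + ∫ ρ in (0:ℝ)..rstar, gpstar ρ * ps' ρ :=
      intervalIntegral.integral_add hint1 hint2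
    have hIlb : (kB - kD) * ps 0 * (cs rstar - cs 0)
        ≤ ∫ ρ in (0:ℝ)..rstar, (kB - kD) * cs' ρ * ps ρ := by
      have he : ∫ ρ in (0:ℝ)..rstar, (kB - kD) * ps 0 * cs' ρ
          = (kB - kD) * ps 0 * (cs rstar - cs 0) := by
        rw [intervalIntegral.integral_const_mul, hI2]
      rw [← he]
      apply intervalIntegral.integral_mono_on hrst.1 _ hint1
      · intro ρ hρ
        have ha := hcs'nn ρ (hsub hρ)
        have hb := hpsmono h0mem (hsub hρ) hρ.1
        nlinarith [mul_nonneg (mul_nonneg (by linarith : (0:ℝ) ≤ kB - kD) ha)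
          (by linarith : (0:ℝ) ≤ ps ρ - ps 0)]
      · apply ContinuousOn.intervalIntegrable
        rw [uIcc_of_le hrst.1]
        exact continuousOn_const.mul (hcs'cont.mono hsub)
    have hWub : (∫ ρ in (0:ℝ)..rstar, gpstar ρ * ps' ρ)
        ≤ gpstar rstar * ps rstar - gpstar 0 * ps 0
          - (kB - kD) * ps 0 * (cs rstar - cs 0) := by linarith
    -- the value of p₀
    have hc₀ := hcsrange 0 h0mem
    have hcst := hcsrange rstar hrst
    have hccmono : cs 0 ≤ cs rstar := hcsmono h0mem hrst hrst.1
    have hM₀ : 0 < KM (cs 0) := by rw [hKMc]; nlinarith [hc₀.1, hc₀.2]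
    have hM₁ : 0 < KM (cs rstar) := by rw [hKMc]; nlinarith [hcst.1, hcst.2]
    have hp0 : KM (cs 0) - KN (cs 0) < KM (cs 0) * ps 0 := by
      rw [hps0]
      simp only [hα]
      set b := KM (cs 0) - KN (cs 0) with hb
      set s := Real.sqrt (b ^ 2 + 4 * KM (cs 0) * KP (cs 0)) with hs
      have hKP0 : 0 < KP (cs 0) := by rw [hKP]; exact mul_pos hkP hc₀.1
      have harg : b ^ 2 < b ^ 2 + 4 * KM (cs 0) * KP (cs 0) := by nlinarith
      have hsq : |b| < s := by
        rw [hs, ← Real.sqrt_sq_eq_abs]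
        exact Real.sqrt_lt_sqrt (sq_nonneg b) harg
      have hbb : b ≤ |b| := le_abs_self b
      have heq : KM (cs 0) * ((b + s) / (2 * KM (cs 0))) = (b + s) / 2 := by
        field_simp
      rw [heq]
      linarith
    -- final algebra
    have hval' : fpstar rstar + gstar rstar
        + (∫ ρ in (0:ℝ)..rstar, gpstar ρ * ps' ρ) = -κ₀ := hval
    rw [hfpstar, hgstar, hg] at hval'
    simp only at hval'
    -- abbreviations
    have hgp0 : gpstar 0 = KM (cs 0) := by simp only [hgpstar]
    have hgp1 : gpstar rstar = KM (cs rstar) := by simp only [hgpstar]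
    rw [hgp0, hgp1] at hWub
    have hKD1 : KD (cs rstar) = kD * (1 - cs rstar) := by rw [hKD]
    -- polynomial forms
    rw [hKMc, hKNc] at hp0
    rw [hKMc (cs 0), hKMc (cs rstar)] at hWub
    rw [hKMc (cs rstar), hKNc (cs rstar), hKD1] at hval'
    rw [hKMc] at hM₀ hM₁
    have halg : (kD + (kB - kD) * cs 0) * (kB * cs rstar - (kP * cs rstar + kQ * (1 - cs rstar)))
        ≤ (kD + (kB - kD) * cs rstar) * ((kD + (kB - kD) * cs 0) - (kQ + (kP - kQ) * cs 0)) := by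
      nlinarith [mul_nonneg (sub_nonneg.2 hccmono) (sub_nonneg.2 h5),
        mul_nonneg (mul_nonneg hM₀.le hkD.le) (sub_nonneg.2 hcst.2)]
    have hA : 0 < (kD + (kB - kD) * cs 0) * ps 0
        - ((kD + (kB - kD) * cs 0) - (kQ + (kP - kQ) * cs 0)) := by linarith [hp0]
    have hXneg : kB * cs rstar - (kP * cs rstar + kQ * (1 - cs rstar))
        - (kD + (kB - kD) * cs rstar) * ps 0 < 0 := by
      nlinarith [mul_pos hM₁ hA, halg, hM₀, hM₁]
    nlinarith [hval', hWub, hXneg]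
  · -- Part 2: the decay estimate
    intro ψ ψr ψt hψc hψrc hψtc hψdr hψdt hψnn hPDE
    -- stationary preliminaries
    have hRsmem : Rs ∈ Icc (0:ℝ) Rs := ⟨hRs0, le_rfl⟩
    have hvsC : ContinuousOn vs (Icc 0 Rs) :=
      fun r hr => ((hvs r hr).continuousAt).continuousWithinAt
    have hMpos : ∀ r ∈ Icc (0:ℝ) Rs, 0 < gpstar r := by
      intro r hr
      rw [hgp_eq]
      nlinarith [(hcsrange r hr).1, (hcsrange r hr).2]
    have hfs_eq : fstar = fun r => kP * cs r + ((kB - kD - kP + kQ) * cs r + (kD - kQ)) * ps r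
        - ((kB - kD) * cs r + kD) * ps r ^ 2 := by
      funext r
      simp only [hfstar, hf, hKP, hKM, hKN, hKB, hKD, hKQ]
      ring
    have hfstarC : ContinuousOn fstar (Icc 0 Rs) := by
      rw [hfs_eq]
      exact ((continuousOn_const.mul hcsC).add
        (((continuousOn_const.mul hcsC).add continuousOn_const).mul hpsC)).sub
        (((continuousOn_const.mul hcsC).add continuousOn_const).mul (hpsC.pow 2))
    have hfcC : ContinuousOn fcstar (Icc 0 Rs) := by
      rw [hfcstar]
      exact (continuousOn_const.add (continuousOn_const.mul hpsC)).sub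
        (continuousOn_const.mul (hpsC.pow 2))
    have hfpC : ContinuousOn fpstar (Icc 0 Rs) := by
      have he : fpstar = fun r => (kD + (kB - kD) * cs r) - (kQ + (kP - kQ) * cs r)
          - 2 * (kD + (kB - kD) * cs r) * ps r := by
        funext r; simp only [hfpstar]; rw [hKMc, hKNc]
      rw [he]
      exact ((continuousOn_const.add (continuousOn_const.mul hcsC)).sub
        (continuousOn_const.add (continuousOn_const.mul hcsC))).sub
        ((continuousOn_const.mul (continuousOn_const.add (continuousOn_const.mul hcsC))).mul hpsC)
    have hgstarC : ContinuousOn gstar (Icc 0 Rs) := by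
      have he : gstar = fun r => (kD + (kB - kD) * cs r) * ps r - kD * (1 - cs r) := by
        funext r; simp only [hgstar, hg, hKD]; rw [hKMc]
      rw [he]
      exact ((continuousOn_const.add (continuousOn_const.mul hcsC)).mul hpsC).sub
        (continuousOn_const.mul (continuousOn_const.sub hcsC))
    have hfsd : ∀ r ∈ Icc (0:ℝ) Rs, HasDerivAt fstar (fcstar r * cs' r + fpstar r * ps' r) r := by
      intro r hr
      have d1 := hcs r hr
      have d2 := hps r hr
      have dtot := ((d1.const_mul kP).add
        (((d1.const_mul (kB - kD - kP + kQ)).add_const (kD - kQ)).mul d2)).sub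
        (((d1.const_mul (kB - kD)).add_const kD).mul (d2.pow 2))
      rw [hfs_eq]
      refine dtot.congr_deriv ?_
      rw [hfcstar, hfpstar]
      simp only [Pi.pow_apply]
      rw [hKMc, hKNc]
      push_cast
      ring
    have hgpd : ∀ r ∈ Icc (0:ℝ) Rs, HasDerivAt gpstar ((kB - kD) * cs' r) r := by
      intro r hr
      have he : gpstar = fun r => kD + (kB - kD) * cs r := funext hgp_eq
      rw [he]
      exact ((hcs r hr).const_mul _).const_add _
    have hfs0 : ∀ r ∈ Icc (0:ℝ) Rs, fstar r = vs r * ps' r := by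
      have hz : ∀ r ∈ Icc (0:ℝ) Rs, vs r * ps' r - fstar r = 0 := by
        apply aux_eq_zero_on_Icc hRs ((hvsC.mul hps'cont).sub hfstarC)
        intro r hr
        show vs r * ps' r - fstar r = 0
        rw [hstat1 r hr]
        simp only [hfstar]
        ring
      intro r hr
      have := hz r hr
      linarith
    have hud : ∀ r ∈ Icc (0:ℝ) Rs, HasDerivAt (fun x => gpstar x * fstar x)
        ((kB - kD) * cs' r * fstar r + gpstar r * (fcstar r * cs' r + fpstar r * ps' r)) r :=
      fun r hr => (hgpd r hr).mul (hfsd r hr)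
    have huDC : ContinuousOn (fun r => (kB - kD) * cs' r * fstar r
        + gpstar r * (fcstar r * cs' r + fpstar r * ps' r)) (Icc 0 Rs) :=
      ((continuousOn_const.mul hcs'cont).mul hfstarC).add
        (hgpC.mul ((hfcC.mul hcs'cont).add (hfpC.mul hps'cont)))
    have hfstar0 : fstar 0 = 0 := by rw [hfs0 0 h0mem, hvs0, zero_mul]
    have hfstarRs : fstar Rs = 0 := by rw [hfs0 Rs hRsmem, hvsRs, zero_mul]
    have hwC : ContinuousOn (fun r => gpstar r * ps' r) (Icc 0 Rs) := hgpC.mul hps'cont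
    have hmonoI : Set.uIoc (0:ℝ) Rs ⊆ Icc 0 Rs := by
      rw [uIoc_of_le hRs0]; exact Ioc_subset_Icc_self
    have hInt : ∀ {F : ℝ → ℝ}, ContinuousOn F (Icc 0 Rs) → ∀ {a b : ℝ},
        a ∈ Icc (0:ℝ) Rs → b ∈ Icc (0:ℝ) Rs → IntervalIntegrable F volume a b := by
      intro F hF a b ha hb
      exact (hF.mono (uIcc_subset_Icc ha hb)).intervalIntegrable
    have hθnn : 0 ≤ θk := by
      rw [hθk]
      rcases Nat.eq_zero_or_pos k with hk | hk
      · simp [hk]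
      · apply div_nonneg (Nat.cast_nonneg k)
        have h2n : (2:ℝ) ≤ (n:ℝ) := by exact_mod_cast hn
        have h1k : (1:ℝ) ≤ (k:ℝ) := by exact_mod_cast hk
        linarith
    refine ⟨fun τ => ∫ r in (0:ℝ)..Rs, gpstar r * ps' r * ψt r τ, ?_⟩
    intro t ht'
    have ht : 0 < t := ht'
    have htIci : t ∈ Ici (0:ℝ) := le_of_lt ht
    have hφC : ContinuousOn (fun r => ψ r t) (Icc 0 Rs) := contOn_slice hψc htIci
    have hφrC : ContinuousOn (fun r => ψr r t) (Icc 0 Rs) := contOn_slice hψrc htIci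
    have hφtC : ContinuousOn (fun r => ψt r t) (Icc 0 Rs) := contOn_slice hψtc htIci
    have hwφC : ContinuousOn (fun r => gpstar r * ps' r * ψ r t) (Icc 0 Rs) := hwC.mul hφC
    constructor
    · -- differentiation under the integral sign
      obtain ⟨C, hC⟩ := (isCompact_Icc.prod isCompact_Icc).exists_bound_of_continuousOn
        (f := fun q : ℝ × ℝ => gpstar q.1 * ps' q.1 * ψt q.1 q.2)
        (s := Icc (0:ℝ) Rs ×ˢ Icc (t/2) (2*t))
        (((hgpC.comp continuous_fst.continuousOn (fun q hq => hq.1)).mul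
          (hps'cont.comp continuous_fst.continuousOn (fun q hq => hq.1))).mul
          (hψtc.mono (fun q hq => ⟨hq.1, le_trans (by linarith) hq.2.1⟩)))
      have key := intervalIntegral.hasDerivAt_integral_of_dominated_loc_of_deriv_le
        (μ := volume) (F := fun x r => gpstar r * ps' r * ψ r x)
        (F' := fun x r => gpstar r * ps' r * ψt r x) (x₀ := t) (a := 0) (b := Rs)
        (bound := fun _ => C) (Metric.ball_mem_nhds _ (half_pos ht)) ?_ ?_ ?_ ?_ ?_ ?_
      · exact key.2
      · filter_upwards [Ioi_mem_nhds ht] with x hx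
        exact (((hwC.mul (contOn_slice hψc (mem_Ici.2 (le_of_lt hx)))).mono hmonoI).aestronglyMeasurable
          measurableSet_uIoc)
      · exact hInt hwφC h0mem hRsmem
      · exact ((hwC.mul hφtC).mono hmonoI).aestronglyMeasurable measurableSet_uIoc
      · apply MeasureTheory.ae_of_all
        intro r hr x hx
        rw [Metric.mem_ball, Real.dist_eq] at hx
        obtain ⟨hx1, hx2⟩ := abs_lt.1 hx
        exact hC (r, x) ⟨hmonoI hr, ⟨by linarith, by linarith⟩⟩
      · exact intervalIntegrable_const
      · filter_upwards [aux_ae_ne Rs] with r hrne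
        intro hr x hx
        rw [uIoc_of_le hRs0] at hr
        have hrIoo : r ∈ Ioo (0:ℝ) Rs := ⟨hr.1, lt_of_le_of_ne hr.2 hrne⟩
        rw [Metric.mem_ball, Real.dist_eq] at hx
        obtain ⟨hx1, hx2⟩ := abs_lt.1 hx
        have hx0 : 0 < x := by linarith
        exact HasDerivAt.const_mul (gpstar r * ps' r) (hψdt r hrIoo x hx0)
    · -- the decay inequality
      have hWfC : ContinuousOn (fun x => ∫ ρ in (0:ℝ)..x, gpstar ρ * ps' ρ) (Icc 0 Rs) := by
        have h := intervalIntegral.continuousOn_primitive_interval (a := 0) (b := Rs)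
          (μ := volume) (f := fun ρ => gpstar ρ * ps' ρ) ?_
        · rwa [uIcc_of_le hRs0] at h
        · rw [uIcc_of_le hRs0]; exact hwC.integrableOn_Icc
      have hBfC : ContinuousOn (fun x => ∫ ρ in x..Rs, gpstar ρ * ps' ρ * ψ ρ t)
          (Icc 0 Rs) := by
        have h := intervalIntegral.continuousOn_primitive_interval_left (a := 0) (b := Rs)
          (μ := volume) (f := fun ρ => gpstar ρ * ps' ρ * ψ ρ t) ?_
        · rwa [uIcc_of_le hRs0] at h
        · rw [uIcc_of_le hRs0]; exact hwφC.integrableOn_Icc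
      have hWfd : ∀ r ∈ Ioo (0:ℝ) Rs,
          HasDerivAt (fun x => ∫ ρ in (0:ℝ)..x, gpstar ρ * ps' ρ) (gpstar r * ps' r) r := by
        intro r hr
        apply intervalIntegral.integral_hasDerivAt_right
          (hInt hwC h0mem (Ioo_subset_Icc_self hr))
        · exact ⟨Ioo 0 Rs, isOpen_Ioo.mem_nhds hr,
            (hwC.mono Ioo_subset_Icc_self).aestronglyMeasurable measurableSet_Ioo⟩
        · exact hwC.continuousAt (Icc_mem_nhds hr.1 hr.2)
      have hBfd : ∀ r ∈ Ioo (0:ℝ) Rs,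
          HasDerivAt (fun x => ∫ ρ in x..Rs, gpstar ρ * ps' ρ * ψ ρ t)
            (-(gpstar r * ps' r * ψ r t)) r := by
        intro r hr
        have h1 : HasDerivAt (fun x => ∫ ρ in Rs..x, gpstar ρ * ps' ρ * ψ ρ t)
            (gpstar r * ps' r * ψ r t) r := by
          apply intervalIntegral.integral_hasDerivAt_right
            (hInt hwφC hRsmem (Ioo_subset_Icc_self hr))
          · exact ⟨Ioo 0 Rs, isOpen_Ioo.mem_nhds hr,
              (hwφC.mono Ioo_subset_Icc_self).aestronglyMeasurable measurableSet_Ioo⟩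
          · exact hwφC.continuousAt (Icc_mem_nhds hr.1 hr.2)
        have he : (fun x => ∫ ρ in x..Rs, gpstar ρ * ps' ρ * ψ ρ t)
            = fun x => -∫ ρ in Rs..x, gpstar ρ * ps' ρ * ψ ρ t := by
          funext x; rw [intervalIntegral.integral_symm Rs x]
        rw [he]
        exact h1.neg
      -- integration by parts 1
      have hIBP1 : (∫ r in (0:ℝ)..Rs, (((kB - kD) * cs' r * fstar r
            + gpstar r * (fcstar r * cs' r + fpstar r * ps' r)) * ψ r t
            + gpstar r * fstar r * ψr r t)) = 0 := by
        have h := intervalIntegral.integral_eq_sub_of_hasDeriv_right_of_le hRs0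
          (f := fun r => gpstar r * fstar r * ψ r t)
          (f' := fun r => ((kB - kD) * cs' r * fstar r
            + gpstar r * (fcstar r * cs' r + fpstar r * ps' r)) * ψ r t
            + gpstar r * fstar r * ψr r t)
          ((hgpC.mul hfstarC).mul hφC)
          (fun r hr => (((hud r (Ioo_subset_Icc_self hr)).mul
            (hψdr r hr t ht')).hasDerivWithinAt))
          (hInt ((huDC.mul hφC).add ((hgpC.mul hfstarC).mul hφrC)) h0mem hRsmem)
        rw [h]
        simp only [hfstarRs, hfstar0]
        ring
      have hT1 : (∫ r in (0:ℝ)..Rs, -(gpstar r * fstar r) * ψr r t)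
          = ∫ r in (0:ℝ)..Rs, ((kB - kD) * cs' r * fstar r
            + gpstar r * (fcstar r * cs' r + fpstar r * ps' r)) * ψ r t := by
        have hsplit := intervalIntegral.integral_add
          (hInt (huDC.mul hφC) h0mem hRsmem)
          (hInt ((hgpC.mul hfstarC).mul hφrC) h0mem hRsmem)
        have h0 : (∫ r in (0:ℝ)..Rs, ((kB - kD) * cs' r * fstar r
            + gpstar r * (fcstar r * cs' r + fpstar r * ps' r)) * ψ r t)
            + (∫ r in (0:ℝ)..Rs, gpstar r * fstar r * ψr r t) = 0 := by
          simp only [Pi.mul_apply] at hsplit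
          rw [← hsplit]; exact hIBP1
        have hneg : (fun r => -(gpstar r * fstar r) * ψr r t)
            = fun r => -(gpstar r * fstar r * ψr r t) := by funext r; ring
        rw [hneg, intervalIntegral.integral_neg]
        linarith
      -- integration by parts 2
      have hIBP2 : (∫ r in (0:ℝ)..Rs, (gpstar r * ps' r
            * (∫ ρ in r..Rs, gpstar ρ * ps' ρ * ψ ρ t)
            + (∫ ρ in (0:ℝ)..r, gpstar ρ * ps' ρ) * -(gpstar r * ps' r * ψ r t))) = 0 := by
        have h := intervalIntegral.integral_eq_sub_of_hasDeriv_right_of_le hRs0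
          (f := fun x => (∫ ρ in (0:ℝ)..x, gpstar ρ * ps' ρ)
            * ∫ ρ in x..Rs, gpstar ρ * ps' ρ * ψ ρ t)
          (f' := fun r => gpstar r * ps' r * (∫ ρ in r..Rs, gpstar ρ * ps' ρ * ψ ρ t)
            + (∫ ρ in (0:ℝ)..r, gpstar ρ * ps' ρ) * -(gpstar r * ps' r * ψ r t))
          (hWfC.mul hBfC)
          (fun r hr => ((hWfd r hr).mul (hBfd r hr)).hasDerivWithinAt)
          (hInt ((hwC.mul hBfC).add (hWfC.mul hwφC.neg)) h0mem hRsmem)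
        rw [h]
        simp [intervalIntegral.integral_same]
      have hT3 : (∫ r in (0:ℝ)..Rs, gpstar r * ps' r
            * (∫ ρ in r..Rs, gpstar ρ * ps' ρ * ψ ρ t))
          = ∫ r in (0:ℝ)..Rs, (∫ ρ in (0:ℝ)..r, gpstar ρ * ps' ρ)
            * (gpstar r * ps' r * ψ r t) := by
        have hsplit := intervalIntegral.integral_add
          (hInt (hwC.mul hBfC) h0mem hRsmem)
          (hInt (hWfC.mul hwφC.neg) h0mem hRsmem)
        have h0 : (∫ r in (0:ℝ)..Rs, gpstar r * ps' r
            * (∫ ρ in r..Rs, gpstar ρ * ps' ρ * ψ ρ t))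
            + (∫ r in (0:ℝ)..Rs, (∫ ρ in (0:ℝ)..r, gpstar ρ * ps' ρ)
              * -(gpstar r * ps' r * ψ r t)) = 0 := by
          simp only [Pi.mul_apply, Pi.neg_apply] at hsplit
          rw [← hsplit]; exact hIBP2
        have hneg : (fun r => (∫ ρ in (0:ℝ)..r, gpstar ρ * ps' ρ)
            * -(gpstar r * ps' r * ψ r t))
            = fun r => -((∫ ρ in (0:ℝ)..r, gpstar ρ * ps' ρ)
              * (gpstar r * ps' r * ψ r t)) := by funext r; ring
        rw [hneg, intervalIntegral.integral_neg] at h0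
        linarith
      -- the pointwise bound under the integral
      have hae1 : ∀ᵐ r ∂(volume.restrict (Icc (0:ℝ) Rs)), r ≠ 0 :=
        (aux_ae_ne 0).filter_mono (MeasureTheory.ae_mono MeasureTheory.Measure.restrict_le_self)
      have hae2 : ∀ᵐ r ∂(volume.restrict (Icc (0:ℝ) Rs)), r ≠ Rs :=
        (aux_ae_ne Rs).filter_mono (MeasureTheory.ae_mono MeasureTheory.Measure.restrict_le_self)
      have hae3 := MeasureTheory.ae_restrict_mem (μ := volume) (s := Icc (0:ℝ) Rs)
        measurableSet_Icc
      have hchain : (∫ r in (0:ℝ)..Rs, gpstar r * ps' r * ψt r t)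
          ≤ ∫ r in (0:ℝ)..Rs, (-(gpstar r * fstar r) * ψr r t
            + gpstar r * ps' r * ak r * ψ r t
            + gpstar r * ps' r * (∫ ρ in r..Rs, gpstar ρ * ps' ρ * ψ ρ t)) := by
        apply intervalIntegral.integral_mono_ae_restrict hRs0
          (hInt (hwC.mul hφtC) h0mem hRsmem)
          (hInt ((((hgpC.mul hfstarC).neg.mul hφrC).add
            ((hwC.mul hakcont).mul hφC)).add (hwC.mul hBfC)) h0mem hRsmem)
        filter_upwards [hae1, hae2, hae3] with r h0ne hRne hrmem
        have hrIoo : r ∈ Ioo (0:ℝ) Rs :=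
          ⟨lt_of_le_of_ne hrmem.1 (Ne.symm h0ne), lt_of_le_of_ne hrmem.2 hRne⟩
        have hpde := hPDE r hrIoo t ht'
        have hwr : 0 ≤ gpstar r * ps' r := mul_nonneg (hMpos r hrmem).le (hps'nn r hrmem)
        have hAB : (∫ ρ in r..Rs, (r/ρ)^(n+2*k-2) * gpstar ρ * ps' ρ * ψ ρ t)
            ≤ ∫ ρ in r..Rs, gpstar ρ * ps' ρ * ψ ρ t := by
          have hsubIcc : Icc r Rs ⊆ Icc (0:ℝ) Rs := Icc_subset_Icc hrmem.1 le_rfl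
          apply intervalIntegral.integral_mono_on hrIoo.2.le ?_
            (hInt hwφC hrmem hRsmem)
          · intro ρ hρ
            have hρI : ρ ∈ Icc (0:ℝ) Rs := hsubIcc hρ
            have hρpos : 0 < ρ := lt_of_lt_of_le hrIoo.1 hρ.1
            have h01 : 0 ≤ r/ρ := div_nonneg hrmem.1 hρpos.le
            have h11 : r/ρ ≤ 1 := (div_le_one hρpos).2 hρ.1
            have hwφnn : 0 ≤ gpstar ρ * ps' ρ * ψ ρ t :=
              mul_nonneg (mul_nonneg (hMpos ρ hρI).le (hps'nn ρ hρI)) (hψnn ρ hρI t htIci)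
            calc (r/ρ)^(n+2*k-2) * gpstar ρ * ps' ρ * ψ ρ t
                = (r/ρ)^(n+2*k-2) * (gpstar ρ * ps' ρ * ψ ρ t) := by ring
              _ ≤ 1 * (gpstar ρ * ps' ρ * ψ ρ t) :=
                  mul_le_mul_of_nonneg_right (pow_le_one₀ h01 h11) hwφnn
              _ = gpstar ρ * ps' ρ * ψ ρ t := one_mul _
          · apply ContinuousOn.intervalIntegrable
            rw [uIcc_of_le hrIoo.2.le]
            have hcont1 : ContinuousOn (fun ρ => (r/ρ)^(n+2*k-2)) (Icc r Rs) := by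
              apply ContinuousOn.pow
              apply ContinuousOn.div continuousOn_const continuousOn_id
              intro ρ hρ
              exact ne_of_gt (lt_of_lt_of_le hrIoo.1 hρ.1)
            exact ((hcont1.mul (hgpC.mono (Icc_subset_Icc hrmem.1 le_rfl))).mul
              (hps'cont.mono (Icc_subset_Icc hrmem.1 le_rfl))).mul
              (hφC.mono (Icc_subset_Icc hrmem.1 le_rfl))
        calc gpstar r * ps' r * ψt r t
            = -(gpstar r * fstar r) * ψr r t + gpstar r * ps' r * ak r * ψ r t
              + gpstar r * ps' r * (θk * (∫ ρ in r..Rs,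
                  (r/ρ)^(n+2*k-2) * gpstar ρ * ps' ρ * ψ ρ t)
                + (1-θk) * ∫ ρ in r..Rs, gpstar ρ * ps' ρ * ψ ρ t) := by
              rw [hpde, hfs0 r hrmem]; ring
          _ ≤ -(gpstar r * fstar r) * ψr r t + gpstar r * ps' r * ak r * ψ r t
              + gpstar r * ps' r * (∫ ρ in r..Rs, gpstar ρ * ps' ρ * ψ ρ t) := by
              apply add_le_add_right _ _
              nlinarith [mul_nonneg hwr (mul_nonneg hθnn (sub_nonneg.2 hAB))]
      -- splitting of the right-hand side
      have hadd1 := intervalIntegral.integral_add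
        (hInt ((hgpC.mul hfstarC).neg.mul hφrC) h0mem hRsmem)
        (hInt ((hwC.mul hakcont).mul hφC) h0mem hRsmem)
      have hadd2 := intervalIntegral.integral_add
        ((hInt ((hgpC.mul hfstarC).neg.mul hφrC) h0mem hRsmem).add
          (hInt ((hwC.mul hakcont).mul hφC) h0mem hRsmem))
        (hInt (hwC.mul hBfC) h0mem hRsmem)
      -- combine the three integrals into one
      have hABC : (∫ r in (0:ℝ)..Rs, ((kB - kD) * cs' r * fstar r
            + gpstar r * (fcstar r * cs' r + fpstar r * ps' r)) * ψ r t)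
          + (∫ r in (0:ℝ)..Rs, gpstar r * ps' r * ak r * ψ r t)
          + (∫ r in (0:ℝ)..Rs, (∫ ρ in (0:ℝ)..r, gpstar ρ * ps' ρ)
            * (gpstar r * ps' r * ψ r t))
          = ∫ r in (0:ℝ)..Rs, (((kB - kD) * cs' r * fstar r
            + gpstar r * (fcstar r * cs' r + fpstar r * ps' r)) * ψ r t
            + gpstar r * ps' r * ak r * ψ r t
            + (∫ ρ in (0:ℝ)..r, gpstar ρ * ps' ρ) * (gpstar r * ps' r * ψ r t)) := by
        erw [intervalIntegral.integral_add
          ((hInt (huDC.mul hφC) h0mem hRsmem).add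
            (hInt ((hwC.mul hakcont).mul hφC) h0mem hRsmem))
          (hInt (hWfC.mul hwφC) h0mem hRsmem),
          intervalIntegral.integral_add
          (hInt (huDC.mul hφC) h0mem hRsmem)
          (hInt ((hwC.mul hakcont).mul hφC) h0mem hRsmem)]
        rfl
      -- the final pointwise estimate
      have hmono2 : (∫ r in (0:ℝ)..Rs, (((kB - kD) * cs' r * fstar r
            + gpstar r * (fcstar r * cs' r + fpstar r * ps' r)) * ψ r t
            + gpstar r * ps' r * ak r * ψ r t
            + (∫ ρ in (0:ℝ)..r, gpstar ρ * ps' ρ) * (gpstar r * ps' r * ψ r t)))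
          ≤ ∫ r in (0:ℝ)..Rs, -κ₀ * (gpstar r * ps' r * ψ r t) := by
        apply intervalIntegral.integral_mono_ae_restrict hRs0
          (hInt (((huDC.mul hφC).add ((hwC.mul hakcont).mul hφC)).add
            (hWfC.mul hwφC)) h0mem hRsmem)
          (hInt (continuousOn_const.mul hwφC) h0mem hRsmem)
        filter_upwards [hae1, hae2, hae3] with r h0ne hRne hrmem
        have hrIoo : r ∈ Ioo (0:ℝ) Rs :=
          ⟨lt_of_le_of_ne hrmem.1 (Ne.symm h0ne), lt_of_le_of_ne hrmem.2 hRne⟩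
        have hwr : 0 ≤ gpstar r * ps' r := mul_nonneg (hMpos r hrmem).le (hps'nn r hrmem)
        have hψnnr : 0 ≤ ψ r t := hψnn r hrmem t htIci
        have hps'r : 0 < ps' r := hps'pos r ⟨hrIoo.1, hrmem.2⟩
        have hvsr : vs r < 0 := hvsneg r hrIoo
        have hcs'r : 0 ≤ cs' r := hcs'nn r hrmem
        have hgppos : 0 < gpstar r := hMpos r hrmem
        have hkr : 0 ≤ (k:ℝ)/r := div_nonneg (Nat.cast_nonneg k) hrIoo.1.le
        have hkey : ((kB - kD) * cs' r * fstar r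
            + gpstar r * (fcstar r * cs' r + fpstar r * ps' r))
            + gpstar r * ps' r * ak r ≤ gpstar r * ps' r * (fpstar r + gstar r) := by
          rw [hak r ⟨hrIoo.1, hrmem.2⟩, hfs0 r hrmem]
          have heq : gpstar r * ps' r * ((k:ℝ)/r * vs r + gstar r
              - fcstar r * cs' r / ps' r)
              = (k:ℝ)/r * (gpstar r * (vs r * ps' r)) + gpstar r * ps' r * gstar r
                - gpstar r * (fcstar r * cs' r) := by
            field_simp
          rw [heq]
          have hvp : 0 ≤ -(vs r * ps' r) := by nlinarith
          have h3 : (kB - kD) * cs' r * (vs r * ps' r) ≤ 0 := by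
            nlinarith [mul_nonneg (mul_nonneg (by linarith : (0:ℝ) ≤ kB - kD) hcs'r) hvp]
          have h4 : (k:ℝ)/r * (gpstar r * (vs r * ps' r)) ≤ 0 := by
            nlinarith [mul_nonneg hkr (mul_nonneg hgppos.le hvp)]
          nlinarith
        have hWub2 : fpstar r + gstar r + (∫ ρ in (0:ℝ)..r, gpstar ρ * ps' ρ) ≤ -κ₀ :=
          hub ⟨r, hrmem, rfl⟩
        calc ((kB - kD) * cs' r * fstar r
            + gpstar r * (fcstar r * cs' r + fpstar r * ps' r)) * ψ r t
            + gpstar r * ps' r * ak r * ψ r t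
            + (∫ ρ in (0:ℝ)..r, gpstar ρ * ps' ρ) * (gpstar r * ps' r * ψ r t)
            = (((kB - kD) * cs' r * fstar r
              + gpstar r * (fcstar r * cs' r + fpstar r * ps' r))
              + gpstar r * ps' r * ak r) * ψ r t
              + (∫ ρ in (0:ℝ)..r, gpstar ρ * ps' ρ) * (gpstar r * ps' r * ψ r t) := by
              ring
          _ ≤ gpstar r * ps' r * (fpstar r + gstar r) * ψ r t
              + (∫ ρ in (0:ℝ)..r, gpstar ρ * ps' ρ) * (gpstar r * ps' r * ψ r t) := by
              exact add_le_add_left (mul_le_mul_of_nonneg_right hkey hψnnr) _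
          _ = (fpstar r + gstar r + (∫ ρ in (0:ℝ)..r, gpstar ρ * ps' ρ))
              * (gpstar r * ps' r * ψ r t) := by ring
          _ ≤ -κ₀ * (gpstar r * ps' r * ψ r t) :=
              mul_le_mul_of_nonneg_right hWub2 (mul_nonneg hwr hψnnr)
      have hpull : (∫ r in (0:ℝ)..Rs, -κ₀ * (gpstar r * ps' r * ψ r t))
          = -κ₀ * ∫ r in (0:ℝ)..Rs, gpstar r * ps' r * ψ r t :=
        intervalIntegral.integral_const_mul _ _
      calc (∫ r in (0:ℝ)..Rs, gpstar r * ps' r * ψt r t)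
          ≤ ∫ r in (0:ℝ)..Rs, (-(gpstar r * fstar r) * ψr r t
            + gpstar r * ps' r * ak r * ψ r t
            + gpstar r * ps' r * (∫ ρ in r..Rs, gpstar ρ * ps' ρ * ψ ρ t)) := hchain
        _ = (∫ r in (0:ℝ)..Rs, -(gpstar r * fstar r) * ψr r t)
            + (∫ r in (0:ℝ)..Rs, gpstar r * ps' r * ak r * ψ r t)
            + (∫ r in (0:ℝ)..Rs, gpstar r * ps' r
              * (∫ ρ in r..Rs, gpstar ρ * ps' ρ * ψ ρ t)) := by
            simp only [Pi.mul_apply, Pi.add_apply, Pi.neg_apply] at hadd1 hadd2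
            rw [hadd2, hadd1]
        _ = (∫ r in (0:ℝ)..Rs, ((kB - kD) * cs' r * fstar r
            + gpstar r * (fcstar r * cs' r + fpstar r * ps' r)) * ψ r t)
            + (∫ r in (0:ℝ)..Rs, gpstar r * ps' r * ak r * ψ r t)
            + (∫ r in (0:ℝ)..Rs, (∫ ρ in (0:ℝ)..r, gpstar ρ * ps' ρ)
              * (gpstar r * ps' r * ψ r t)) := by
            rw [hT1, hT3]
        _ = ∫ r in (0:ℝ)..Rs, (((kB - kD) * cs' r * fstar r
            + gpstar r * (fcstar r * cs' r + fpstar r * ps' r)) * ψ r t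
            + gpstar r * ps' r * ak r * ψ r t
            + (∫ ρ in (0:ℝ)..r, gpstar ρ * ps' ρ) * (gpstar r * ps' r * ψ r t)) := hABC
        _ ≤ ∫ r in (0:ℝ)..Rs, -κ₀ * (gpstar r * ps' r * ψ r t) := hmono2
        _ = -κ₀ * ∫ r in (0:ℝ)..Rs, gpstar r * ps' r * ψ r t := hpull
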